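/- arXiv:2010.11597 — 2 statements merged into one kernel-verified Lean document; each statement's English description precedes it below -/
import Mathlib

section
/- Let μ be a singular cardinal of countable cofinality and assume κ = μ⁺ = 2^μ. If T is a κ-Kurepa subtree of ^{<κ}κ, then the set [T] is not a continuous image of ^κκ. -/
open Cardinal Set

noncomputable section

namespace GBaire

universe u

/-- The underlying well-ordered set of the cardinal `κ`, i.e. the type of ordinals `< κ`. -/
abbrev K (κ : Cardinal.{u}) : Type u := κ.ord.ToType

/-- The set `^{<κ}κ` of all functions from a proper initial segment of `κ` to `κ`. -/
abbrev PreFun (κ : Cardinal.{u}) : Type u := Σ α : K κ, ({β : K κ // β < α} → K κ)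

variable (κ : Cardinal.{u})

/-- The restriction `x ↾ α` of a function `x ∈ ^κκ` to the initial segment determined by `α`. -/
def resT (x : K κ → K κ) (α : K κ) : PreFun κ := ⟨α, fun β => x β.1⟩

/-- The restriction of `s ∈ ^{<κ}κ` to (the minimum of its domain and) `γ`.  When
`γ ≤ s.1` this is the restriction `s ↾ γ`; otherwise it equals `s`. -/
def cut (s : PreFun κ) (γ : K κ) : PreFun κ :=
  ⟨min γ s.1, fun β => s.2 ⟨β.1, lt_of_lt_of_le β.2 (min_le_right _ _)⟩⟩

/-- A subtree of `^{<κ}κ`: a set of elements of `^{<κ}κ` closed under restrictions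
to smaller ordinals. -/
def IsSubtree (T : Set (PreFun κ)) : Prop :=
  ∀ s ∈ T, ∀ γ : K κ, γ < s.1 → cut κ s γ ∈ T

/-- The `α`-th level `T(α)` of `T`. -/
def level (T : Set (PreFun κ)) (α : K κ) : Set (PreFun κ) := {s ∈ T | s.1 = α}

/-- The set `[T]` of cofinal branches of `T`, i.e. all `x ∈ ^κκ` all of whose
restrictions lie in `T`. -/
def branches (T : Set (PreFun κ)) : Set (K κ → K κ) := {x | ∀ α : K κ, resT κ x α ∈ T}

/-- `T` is a `κ`-Kurepa subtree of `^{<κ}κ`: a subtree all of whose levels are nonempty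
of cardinality `< κ` and with at least `κ⁺` many cofinal branches. -/
def IsKurepa (T : Set (PreFun κ)) : Prop :=
  IsSubtree κ T ∧ (∀ α : K κ, (level κ T α).Nonempty ∧ #(level κ T α) < κ) ∧
    Order.succ κ ≤ #(branches κ T)

/-- The basic open set `N_s = {x ∈ ^κκ | s ⊆ x}`. -/
def Nbhd (s : PreFun κ) : Set (K κ → K κ) := {x | resT κ x s.1 = s}

/-- The topology of the generalized Baire space `^κκ`, generated by the sets `N_s`. -/
def baire : TopologicalSpace (K κ → K κ) :=
  TopologicalSpace.generateFrom {U | ∃ s : PreFun κ, U = Nbhd κ s}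

/-- `X` is a continuous image of `^κκ`: there is a continuous surjection from `^κκ`
onto `X` (with the subspace topology). -/
def IsContImage (X : Set (K κ → K κ)) : Prop :=
  letI := baire κ
  ∃ f : (K κ → K κ) → X, Continuous f ∧ Function.Surjective f

/-- `X` is a retract of `^κκ`: there is a continuous `r : ^κκ → ^κκ` with range
contained in `X` that is the identity on `X`. -/
def IsRetract (X : Set (K κ → K κ)) : Prop :=
  letI := baire κ
  ∃ r : (K κ → K κ) → (K κ → K κ),
    Continuous r ∧ Set.range r ⊆ X ∧ ∀ x ∈ X, r x = x

/-- `y` is an isolated point of `Y ⊆ ^κκ`. -/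
def IsIsolatedIn (Y : Set (K κ → K κ)) (y : K κ → K κ) : Prop :=
  y ∈ Y ∧ ∃ α : K κ, Nbhd κ (resT κ y α) ∩ Y = {y}

/-- `T` is slim: `|T(α)| ≤ |α|` for all sufficiently large `α < κ`. -/
def IsSlim (T : Set (PreFun κ)) : Prop :=
  ∃ α₀ : K κ, ∀ α : K κ, α₀ ≤ α → #(level κ T α) ≤ #{β : K κ // β < α}

/-- `C ⊆ κ` is closed: it contains every least upper bound of a nonempty subset of `C`. -/
def ClosedIn (C : Set (K κ)) : Prop :=
  ∀ A ⊆ C, A.Nonempty → ∀ x : K κ, IsLUB A x → x ∈ C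

/-- `C ⊆ κ` is unbounded in `κ`. -/
def UnboundedIn (C : Set (K κ)) : Prop := ∀ x : K κ, ∃ y ∈ C, x < y

/-- `S ⊆ κ` is stationary in `κ`: it meets every closed unbounded subset of `κ`. -/
def Stationary (S : Set (K κ)) : Prop :=
  ∀ C : Set (K κ), ClosedIn κ C → UnboundedIn κ C → (S ∩ C).Nonempty

/-- `T` is stationary slim: `|T(α)| ≤ |α|` for stationarily many `α < κ`. -/
def StatSlim (T : Set (PreFun κ)) : Prop :=
  Stationary κ {α : K κ | #(level κ T α) ≤ #{β : K κ // β < α}}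

/-- `α` is a limit ordinal (as an element of `κ`): it is neither the least element
nor a successor. -/
def IsLimitElt (α : K κ) : Prop :=
  (∃ β : K κ, β < α) ∧ ∀ β : K κ, β < α → ∃ γ : K κ, β < γ ∧ γ < α

/-- The boundary `∂T` of a subtree `T`: the minimal elements of `^{<κ}κ \ T`. -/
def boundary (T : Set (PreFun κ)) : Set (PreFun κ) :=
  {t | t ∉ T ∧ ∀ γ : K κ, γ < t.1 → cut κ t γ ∈ T}

/-- `T` is superthin: for every limit ordinal `α < κ`, the set of elements of
`T ∪ ∂T` with domain `α` has cardinality `< κ`. -/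
def IsSuperthin (T : Set (PreFun κ)) : Prop :=
  ∀ α : K κ, IsLimitElt κ α → #{s ∈ T ∪ boundary κ T | s.1 = α} < κ

/-- `T` is pruned: every element of `T` has a proper extension in `T`. -/
def IsPruned (T : Set (PreFun κ)) : Prop :=
  ∀ s ∈ T, ∃ t ∈ T, s.1 < t.1 ∧ cut κ t s.1 = s

/-- `T` is `<κ`-closed: the union of every (strictly increasing with respect to proper
end-extension) sequence of elements of `T` indexed by an ordinal `< κ` again lies in `T`.
Here `u` is the union of the sequence `s` iff the domain of `u` is the least upper bound
of the domains of the `s ξ` and every `s ξ` is a restriction of `u`. -/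
def IsLtClosed (T : Set (PreFun κ)) : Prop :=
  ∀ (γ : K κ) (s : {ξ : K κ // ξ < γ} → PreFun κ),
    (∀ ξ ζ : {ξ : K κ // ξ < γ}, ξ < ζ → (s ξ).1 < (s ζ).1 ∧ cut κ (s ζ) (s ξ).1 = s ξ) →
    (∀ ξ, s ξ ∈ T) →
    ∀ u : PreFun κ, IsLUB (Set.range fun ξ => (s ξ).1) u.1 →
      (∀ ξ, cut κ u (s ξ).1 = s ξ) → u ∈ T

/-- `T` contains a Cantor subtree. -/
def HasCantorSubtree (T : Set (PreFun κ)) : Prop :=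
  ∃ (l : ℕ → K κ) (lam : K κ), StrictMono l ∧ IsLUB (Set.range l) lam ∧
    (level κ T lam).Nonempty ∧
    ∃ B ⊆ level κ T lam, ¬ B.Countable ∧
      ∀ n : ℕ, ((fun t => cut κ t (l n)) '' B).Countable

/-- proper end-extension on `^{<κ}κ`. -/
def pext (s t : PreFun κ) : Prop := s.1 < t.1 ∧ cut κ t s.1 = s

/-- A set `A ⊆ ^{<κ}κ`, regarded as a tree under proper end-extension, is trivially
coherent: it is order-isomorphic to a subtree of `^{<λ}2` (for `λ` its height) all of
whose elements `t` satisfy that `t⁻¹{0}` is finite.  (Here the comparison tree is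
realized as a subtree `U` of `^{<κ}κ` taking only the values `0` and `1`, i.e. values
with at most one predecessor, such that each `u ∈ U` takes the value `0`, i.e. the
value with no predecessor, only finitely often.) -/
def TriviallyCoherent (A : Set (PreFun κ)) : Prop :=
  ∃ U : Set (PreFun κ),
    IsSubtree κ U ∧
    (∀ u ∈ U, ∀ β : {b : K κ // b < u.1}, #{γ : K κ // γ < u.2 β} ≤ 1) ∧
    (∀ u ∈ U, {β : {b : K κ // b < u.1} | ¬ ∃ γ : K κ, γ < u.2 β}.Finite) ∧
    ∃ f : A → U, Function.Bijective f ∧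
      ∀ s t : A, pext κ s.1 t.1 ↔ pext κ (f s).1 (f t).1

/-- `T` is locally coherent: each of its proper initial segments `T ∩ ^{<α}κ` is
trivially coherent. -/
def LocallyCoherent (T : Set (PreFun κ)) : Prop :=
  ∀ α : K κ, TriviallyCoherent κ {s ∈ T | s.1 < α}

end GBaire

namespace GBaire

/-! ### Auxiliary material for Statement 2 -/

/-- Iterate a child-selection function along a (reversed) list of indices. -/
def nodeIter {Nd : Type*} {I : Type*} (root : Nd) (c : Nd → I → Nd) : List I → Nd
  | [] => root
  | i :: l => c (nodeIter root c l) i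

/-- The reversed initial segment `[σ (n-1), ..., σ 0]` of a sequence `σ`. -/
def listPrefix {I : Type*} (σ : ℕ → I) : ℕ → List I
  | 0 => []
  | n + 1 => σ n :: listPrefix σ n

lemma listPrefix_congr {I : Type*} {σ τ : ℕ → I} : ∀ n : ℕ, (∀ m < n, σ m = τ m) →
    listPrefix σ n = listPrefix τ n
  | 0, _ => rfl
  | n + 1, h => by
      simp only [listPrefix]
      rw [h n (Nat.lt_succ_self n),
        listPrefix_congr n fun m hm => h m (hm.trans (Nat.lt_succ_self n))]

section Aux

variable {κ : Cardinal.{u}}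

lemma resT_eq_iff {a b : K κ → K κ} {α : K κ} :
    resT κ a α = resT κ b α ↔ ∀ ξ : K κ, ξ < α → a ξ = b ξ := by
  constructor
  · intro h ξ hξ
    have h2 : HEq (resT κ a α).2 (resT κ b α).2 := by rw [h]
    have h3 : (resT κ a α).2 = (resT κ b α).2 := eq_of_heq h2
    exact congrFun h3 ⟨ξ, hξ⟩
  · intro h
    exact congrArg (Sigma.mk α) (funext fun β => h β.1 β.2)

lemma resT_eq_of_le {a b : K κ → K κ} {α γ : K κ} (h : resT κ a α = resT κ b α)
    (hγ : γ ≤ α) : resT κ a γ = resT κ b γ :=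
  resT_eq_iff.2 fun ξ hξ => resT_eq_iff.1 h ξ (lt_of_lt_of_le hξ hγ)

lemma mem_Nbhd_resT {x y : K κ → K κ} {α : K κ} :
    y ∈ Nbhd κ (resT κ x α) ↔ resT κ y α = resT κ x α := Iff.rfl

lemma self_mem_Nbhd_resT (x : K κ → K κ) (α : K κ) : x ∈ Nbhd κ (resT κ x α) := rfl

lemma Nbhd_resT_mono {x : K κ → K κ} {γ α : K κ} (h : γ ≤ α) :
    Nbhd κ (resT κ x α) ⊆ Nbhd κ (resT κ x γ) := fun _ hz => resT_eq_of_le hz h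

/-- In a regular cardinal, any small family has a strict upper bound. -/
lemma exists_forall_lt {ι : Type u} (hreg : κ.ord.cof = κ) (hℵ : ℵ₀ ≤ κ)
    (g : ι → K κ) (hι : #ι < κ) : ∃ b : K κ, ∀ i, g i < b := by
  have hlim : Order.IsSuccLimit κ.ord := Cardinal.isSuccLimit_ord hℵ
  let e := Ordinal.ToType.mk (o := κ.ord)
  have hs : (⨆ i, Order.succ ((e.symm (g i)) : Ordinal)) < κ.ord := by
    refine Ordinal.iSup_lt_ord (by rwa [hreg]) fun i => hlim.succ_lt ?_
    exact (e.symm (g i)).2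
  refine ⟨e ⟨_, hs⟩, fun i => ?_⟩
  have h1 : e.symm (g i) < (⟨_, hs⟩ : Set.Iio κ.ord) := by
    show ((e.symm (g i)) : Ordinal) < _
    exact lt_of_lt_of_le (Order.lt_succ _) (Ordinal.le_iSup _ i)
  have := e.strictMono h1
  rwa [OrderIso.apply_symm_apply] at this

lemma mk_lt_of_mem_K (α : K κ) : #{β : K κ // β < α} < κ :=
  Cardinal.mk_Iio_toType_ord_lt α

lemma mk_preFun_le (hℵ : ℵ₀ ≤ κ) (hpow : ∀ ν : Cardinal.{u}, ν < κ → κ ^ ν ≤ κ) :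
    #(PreFun κ) ≤ κ := by
  have hK : #(K κ) = κ := by rw [Cardinal.mk_ord_toType]
  calc #(PreFun κ) = Cardinal.sum (fun α : K κ => #({β : K κ // β < α} → K κ)) :=
        Cardinal.mk_sigma _
    _ ≤ Cardinal.sum (fun _ : K κ => κ) := by
        refine Cardinal.sum_le_sum _ _ fun α => ?_
        rw [← Cardinal.power_def, hK]
        exact hpow _ (mk_lt_of_mem_K α)
    _ = #(K κ) * κ := Cardinal.sum_const' _ _
    _ = κ := by rw [hK, Cardinal.mul_eq_self hℵ]

lemma generateOpen_nbhd (hne : Nonempty (K κ)) {U : Set (K κ → K κ)}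
    (hU : TopologicalSpace.GenerateOpen {V | ∃ s : PreFun κ, V = Nbhd κ s} U) :
    ∀ x ∈ U, ∃ α : K κ, Nbhd κ (resT κ x α) ⊆ U := by
  induction hU with
  | basic V hV =>
      rintro x hx
      obtain ⟨s, rfl⟩ := hV
      exact ⟨s.1, by rw [show resT κ x s.1 = s from hx]⟩
  | univ => exact fun x _ => ⟨Classical.arbitrary _, Set.subset_univ _⟩
  | inter U V _ _ ihU ihV =>
      intro x hx
      obtain ⟨α, hα⟩ := ihU x hx.1
      obtain ⟨β, hβ⟩ := ihV x hx.2
      exact ⟨max α β, Set.subset_inter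
        ((Nbhd_resT_mono (le_max_left _ _)).trans hα)
        ((Nbhd_resT_mono (le_max_right _ _)).trans hβ)⟩
  | sUnion S _ ih =>
      intro x hx
      obtain ⟨V, hV, hxV⟩ := hx
      obtain ⟨α, hα⟩ := ih V hV x hxV
      exact ⟨α, hα.trans (Set.subset_sUnion_of_mem hV)⟩

end Aux



/-- Assume `κ = μ⁺ = 2^μ` for a singular cardinal `μ` of countable
cofinality.  If `T` is a `κ`-Kurepa subtree of `^{<κ}κ`, then `[T]` is not a continuous
image of `^κκ`. -/
theorem kurepa_not_continuous_image_of_succ_countable_cof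
    (μ κ : Cardinal.{u}) (hμ : ℵ₀ < μ) (hcof : μ.ord.cof = ℵ₀)
    (hsucc : κ = Order.succ μ) (h2 : κ = 2 ^ μ)
    (T : Set (PreFun κ)) (hT : IsKurepa κ T) :
    ¬ IsContImage κ (branches κ T) := by
  classical
  intro hcont
  -- basic cardinal arithmetic
  have hμℵ : ℵ₀ ≤ μ := hμ.le
  have hℵκ : ℵ₀ ≤ κ := by rw [hsucc]; exact hμℵ.trans (Order.le_succ μ)
  have hμκ : μ < κ := hsucc ▸ Order.lt_succ μ
  have hκ0 : κ ≠ 0 := (Cardinal.aleph0_pos.trans_le hℵκ).ne'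
  have hreg : κ.ord.cof = κ := by rw [hsucc]; exact (Cardinal.isRegular_succ hμℵ).cof_eq
  have hpow : ∀ ν : Cardinal.{u}, ν < κ → κ ^ ν ≤ κ := by
    intro ν hν
    have hνμ : ν ≤ μ := by rw [hsucc] at hν; exact Order.lt_succ_iff.1 hν
    calc κ ^ ν ≤ κ ^ μ := Cardinal.power_le_power_left hκ0 hνμ
      _ = (2 ^ μ) ^ μ := by rw [← h2]
      _ = 2 ^ (μ * μ) := (Cardinal.power_mul).symm
      _ = 2 ^ μ := by rw [Cardinal.mul_eq_self hμℵ]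
      _ = κ := h2.symm
  have hPre : #(PreFun κ) ≤ κ := mk_preFun_le hℵκ hpow
  have hne : Nonempty (K κ) :=
    Ordinal.nonempty_toType_iff.2 (Cardinal.isSuccLimit_ord hℵκ).pos.ne'
  letI : OrderBot (K κ) := Ordinal.toTypeOrderBot (Cardinal.isSuccLimit_ord hℵκ).pos.ne'
  letI : TopologicalSpace (K κ → K κ) := baire κ
  obtain ⟨f, hfc, hfs⟩ := hcont
  let F : (K κ → K κ) → (K κ → K κ) := fun x => (f x : K κ → K κ)
  have hFc : Continuous F := continuous_subtype_val.comp hfc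
  let Img : PreFun κ → Set (K κ → K κ) := fun s => F '' Nbhd κ s
  let Bad : Set (K κ → K κ) := ⋃ p : {s : PreFun κ // #(Img s) ≤ κ}, Img p.1
  have hBad : #Bad ≤ κ := by
    calc #Bad ≤ Cardinal.sum (fun p : {s : PreFun κ // #(Img s) ≤ κ} => #(Img p.1)) :=
        Cardinal.mk_iUnion_le_sum_mk
      _ ≤ Cardinal.sum (fun _ : {s : PreFun κ // #(Img s) ≤ κ} => κ) :=
        Cardinal.sum_le_sum _ _ (fun p => p.2)
      _ = #{s : PreFun κ // #(Img s) ≤ κ} * κ := Cardinal.sum_const' _ _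
      _ ≤ κ * κ := mul_le_mul' ((Cardinal.mk_subtype_le _).trans hPre) le_rfl
      _ = κ := Cardinal.mul_eq_self hℵκ
  have hsubBad : ∀ s : PreFun κ, #(Img s) ≤ κ → Img s ⊆ Bad := fun s hs =>
    Set.subset_iUnion (fun p : {s : PreFun κ // #(Img s) ≤ κ} => Img p.1) ⟨s, hs⟩
  -- the root
  let x0 : K κ → K κ := fun _ => Classical.arbitrary _
  have hNuniv : Nbhd κ (resT κ x0 ⊥) = Set.univ := by
    ext z
    simp only [Set.mem_univ, iff_true]
    exact mem_Nbhd_resT.2 (resT_eq_iff.2 fun ξ hξ => absurd hξ (not_lt_bot))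
  have hrange : Img (resT κ x0 ⊥) = branches κ T := by
    ext z
    constructor
    · rintro ⟨u, -, rfl⟩
      exact (f u).2
    · intro hz
      obtain ⟨u, hu⟩ := hfs ⟨z, hz⟩
      exact ⟨u, by rw [hNuniv]; trivial, congrArg Subtype.val hu⟩
  have hrootBig : κ < #(Img (resT κ x0 ⊥)) := by
    rw [hrange]
    exact lt_of_lt_of_le (Order.lt_succ κ) hT.2.2
  -- the index type
  let ι : Type u := K μ
  have hKμ : #ι = μ := Cardinal.mk_ord_toType μ
  haveI hιinf : Infinite ι := Cardinal.infinite_iff.2 (hKμ.symm ▸ hμℵ)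
  -- the type of "big" nodes
  let Nd : Type u := {p : (K κ → K κ) × K κ // κ < #(Img (resT κ p.1 p.2))}
  let root : Nd := ⟨(x0, ⊥), hrootBig⟩
  -- the splitting lemma
  have split : ∀ p : Nd, ∃ (c : ι → Nd) (β : K κ) (t : ι → PreFun κ),
      Function.Injective t ∧ (∀ i, (t i).1 = β) ∧
      (∀ i, resT κ (c i).1.1 p.1.2 = resT κ p.1.1 p.1.2) ∧
      (∀ i, p.1.2 < (c i).1.2) ∧
      (∀ i, Img (resT κ (c i).1.1 (c i).1.2) ⊆ Nbhd κ (t i)) := by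
    rintro ⟨⟨xp, γp⟩, hbig⟩
    have hGood : μ ≤ #(Img (resT κ xp γp) \ Bad : Set _) := by
      by_contra hlt
      push_neg at hlt
      have h1 : #(Img (resT κ xp γp)) ≤ κ := by
        calc #(Img (resT κ xp γp)) ≤ #((Img (resT κ xp γp) \ Bad) ∪ Bad : Set _) :=
            Cardinal.mk_le_mk_of_subset (by
              intro z hz
              by_cases hzB : z ∈ Bad
              · exact Or.inr hzB
              · exact Or.inl ⟨hz, hzB⟩)
          _ ≤ #(Img (resT κ xp γp) \ Bad : Set _) + #Bad := Cardinal.mk_union_le _ _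
          _ ≤ κ + κ := add_le_add (hlt.le.trans hμκ.le) hBad
          _ = κ := Cardinal.add_eq_self hℵκ
      exact absurd h1 (not_le.2 hbig)
    have hGood' : #ι ≤ #(Img (resT κ xp γp) \ Bad : Set _) := by rw [hKμ]; exact hGood
    obtain ⟨yemb⟩ := (Cardinal.le_def _ _).1 hGood'
    let y : ι → (K κ → K κ) := fun i => (yemb i).1
    have hy_inj : Function.Injective y := fun i j h => yemb.injective (Subtype.ext h)
    have hy_img : ∀ i, y i ∈ Img (resT κ xp γp) := fun i => (yemb i).2.1
    have hy_bad : ∀ i, y i ∉ Bad := fun i => (yemb i).2.2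
    let g : ι × ι → K κ := fun q =>
      if h : ∃ ξ, y q.1 ξ ≠ y q.2 ξ then h.choose else Classical.arbitrary _
    obtain ⟨β, hβ⟩ := exists_forall_lt hreg hℵκ g (by
      have hmk : #(ι × ι) = μ := by
        have : #(ι × ι) = #ι * #ι := by simp [Cardinal.mk_prod]
        rw [this, hKμ]
        exact Cardinal.mul_eq_self hμℵ
      rw [hmk]
      exact hμκ)
    let t : ι → PreFun κ := fun i => resT κ (y i) β
    have htinj : Function.Injective t := by
      intro i j hij
      by_contra hij'
      have hyne : y i ≠ y j := fun h => hij' (hy_inj h)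
      have hex : ∃ ξ, y i ξ ≠ y j ξ := Function.ne_iff.1 hyne
      have hgeq : g (i, j) = hex.choose := dif_pos hex
      refine hex.choose_spec ?_
      have h5 := resT_eq_iff.1 hij (g (i, j)) (hβ (i, j))
      rwa [hgeq] at h5
    have hchild : ∀ i : ι, ∃ q : Nd, resT κ q.1.1 γp = resT κ xp γp ∧ γp < q.1.2 ∧
        Img (resT κ q.1.1 q.1.2) ⊆ Nbhd κ (t i) := by
      intro i
      obtain ⟨xi, hxiN, hxiF⟩ := hy_img i
      have hVopen : IsOpen (F ⁻¹' Nbhd κ (t i)) :=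
        hFc.isOpen_preimage _ (TopologicalSpace.isOpen_generateFrom_of_mem ⟨t i, rfl⟩)
      have hxiV : xi ∈ F ⁻¹' Nbhd κ (t i) := by
        have h6 : resT κ (F xi) β = resT κ (y i) β := by rw [hxiF]
        exact h6
      obtain ⟨αi, hαi⟩ := generateOpen_nbhd hne hVopen xi hxiV
      obtain ⟨b, hb⟩ := exists_forall_lt hreg hℵκ (fun _ : PUnit.{u+1} => γp) (by
        rw [Cardinal.mk_punit]
        exact lt_of_lt_of_le Cardinal.one_lt_aleph0 hℵκ)
      refine ⟨⟨(xi, max αi b), ?_⟩, hxiN, lt_of_lt_of_le (hb PUnit.unit) (le_max_right _ _), ?_⟩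
      · by_contra hsmall
        push_neg at hsmall
        exact hy_bad i (hsubBad _ hsmall ⟨xi, self_mem_Nbhd_resT _ _, hxiF⟩)
      · rintro z ⟨u, huN, rfl⟩
        exact hαi ((Nbhd_resT_mono (le_max_left _ _)) huN)
    choose c hc1 hc2 hc3 using hchild
    exact ⟨c, β, t, htinj, fun i => rfl, hc1, hc2, hc3⟩
  choose cf βf tf htinjf htlvl hext hltc himg using split
  -- the fusion tree
  let nd : (ℕ → ι) → ℕ → Nd := fun σ n => nodeIter root cf (listPrefix σ n)
  have hndS : ∀ (σ : ℕ → ι) (n : ℕ), nd σ (n + 1) = cf (nd σ n) (σ n) := fun σ n => rfl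
  have hΓmono : ∀ (σ : ℕ → ι) (m n : ℕ), m ≤ n → (nd σ m).1.2 ≤ (nd σ n).1.2 := by
    intro σ m n h
    induction h with
    | refl => exact le_rfl
    | @step k hk ih =>
        refine ih.trans (le_of_lt ?_)
        rw [hndS σ k]
        exact hltc (nd σ k) (σ k)
  have hagree : ∀ (σ : ℕ → ι) (n m : ℕ), m ≤ n →
      resT κ (nd σ n).1.1 (nd σ m).1.2 = resT κ (nd σ m).1.1 (nd σ m).1.2 := by
    intro σ n m h
    induction h with
    | refl => rfl
    | @step k hk ih =>
        have hstep : resT κ (nd σ (k + 1)).1.1 (nd σ k).1.2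
            = resT κ (nd σ k).1.1 (nd σ k).1.2 := by
          rw [hndS σ k]
          exact hext (nd σ k) (σ k)
        exact (resT_eq_of_le hstep (hΓmono σ m k hk)).trans ih
  -- limits of branches of the fusion tree
  let xlim : (ℕ → ι) → (K κ → K κ) := fun σ ξ =>
    if h : ∃ n, ξ < (nd σ n).1.2 then (nd σ (Nat.find h)).1.1 ξ else x0 ξ
  have hxlim : ∀ (σ : ℕ → ι) (n : ℕ),
      resT κ (xlim σ) (nd σ n).1.2 = resT κ (nd σ n).1.1 (nd σ n).1.2 := by
    intro σ n
    refine resT_eq_iff.2 fun ξ hξ => ?_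
    have hex : ∃ k, ξ < (nd σ k).1.2 := ⟨n, hξ⟩
    have h1 : xlim σ ξ = (nd σ (Nat.find hex)).1.1 ξ := dif_pos hex
    rw [h1]
    rcases le_total (Nat.find hex) n with hkn | hnk
    · exact (resT_eq_iff.1 (hagree σ n (Nat.find hex) hkn) ξ (Nat.find_spec hex)).symm
    · exact resT_eq_iff.1 (hagree σ (Nat.find hex) n hnk) ξ hξ
  have hxlimmem : ∀ (σ : ℕ → ι) (n : ℕ),
      xlim σ ∈ Nbhd κ (resT κ (nd σ n).1.1 (nd σ n).1.2) :=
    fun σ n => mem_Nbhd_resT.2 (hxlim σ n)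
  let Y : (ℕ → ι) → (K κ → K κ) := fun σ => F (xlim σ)
  -- separation of limit branches
  have hsep : ∀ σ τ : ℕ → ι, ∀ n : ℕ, σ n ≠ τ n → (∀ m < n, σ m = τ m) →
      resT κ (Y σ) (βf (nd σ n)) ≠ resT κ (Y τ) (βf (nd σ n)) := by
    intro σ τ n hn hmin
    have hndeq : nd τ n = nd σ n := by
      show nodeIter root cf (listPrefix τ n) = nodeIter root cf (listPrefix σ n)
      rw [listPrefix_congr n (fun m hm => (hmin m hm).symm)]
    have h1 : resT κ (Y σ) (βf (nd σ n)) = tf (nd σ n) (σ n) := by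
      have hmem : Y σ ∈ Img (resT κ (nd σ (n + 1)).1.1 (nd σ (n + 1)).1.2) :=
        ⟨xlim σ, hxlimmem σ (n + 1), rfl⟩
      rw [hndS σ n] at hmem
      have h7 : resT κ (Y σ) ((tf (nd σ n) (σ n)).1) = tf (nd σ n) (σ n) :=
        himg (nd σ n) (σ n) hmem
      rw [htlvl (nd σ n) (σ n)] at h7
      exact h7
    have h2 : resT κ (Y τ) (βf (nd σ n)) = tf (nd σ n) (τ n) := by
      have hmem : Y τ ∈ Img (resT κ (nd τ (n + 1)).1.1 (nd τ (n + 1)).1.2) :=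
        ⟨xlim τ, hxlimmem τ (n + 1), rfl⟩
      rw [hndS τ n, hndeq] at hmem
      have h7 : resT κ (Y τ) ((tf (nd σ n) (τ n)).1) = tf (nd σ n) (τ n) :=
        himg (nd σ n) (τ n) hmem
      rw [htlvl (nd σ n) (τ n)] at h7
      exact h7
    rw [h1, h2]
    intro he
    exact hn (htinjf (nd σ n) he)
  -- a level bounding all separation levels
  obtain ⟨A, hA⟩ := exists_forall_lt hreg hℵκ
    (fun l : List ι => βf (nodeIter root cf l)) (by
      rw [Cardinal.mk_list_eq_mk, hKμ]
      exact hμκ)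
  have hyT : ∀ σ : ℕ → ι, resT κ (Y σ) A ∈ level κ T A :=
    fun σ => ⟨(f (xlim σ)).2 A, rfl⟩
  let J : (ℕ → ι) → ↥(level κ T A) := fun σ => ⟨resT κ (Y σ) A, hyT σ⟩
  have hJ : Function.Injective J := by
    intro σ τ h
    by_contra hne
    have hex : ∃ n, σ n ≠ τ n := Function.ne_iff.1 hne
    have hval : resT κ (Y σ) A = resT κ (Y τ) A := congrArg Subtype.val h
    refine hsep σ τ (Nat.find hex) (Nat.find_spec hex)
      (fun m hm => not_not.1 (Nat.find_min hex hm)) ?_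
    exact resT_eq_of_le hval (le_of_lt (hA (listPrefix σ (Nat.find hex))))
  -- counting
  have h1 : μ ^ ℵ₀ ≤ #(level κ T A) := by
    have e1 : #(ℕ → ι) = μ ^ ℵ₀ := by
      rw [Cardinal.mk_arrow]
      simp [hKμ]
    calc μ ^ ℵ₀ = #(ℕ → ι) := e1.symm
      _ ≤ #(level κ T A) := Cardinal.mk_le_of_injective hJ
  have hlev : #(level κ T A) < κ := (hT.2.1 A).2
  have h3 : κ ≤ μ ^ ℵ₀ := by
    rw [hsucc]
    refine Order.succ_le_of_lt ?_
    have h8 := Cardinal.lt_power_cof hμℵ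
    rwa [hcof] at h8
  exact absurd (h3.trans h1) (not_le.2 hlev)

end GBaire
end
end

section
/- Let κ be an uncountable regular cardinal and let T be a subtree of ^{<κ}κ such that the cardinality of [T] is strictly greater than κ^{<κ}. If [T] is a continuous image of ^κκ, then T contains a Cantor subtree. -/
open Cardinal Set

noncomputable section

namespace GBaire

universe v

section Aux

variable {κ : Cardinal.{u}}

/-! ### Basic facts about `K κ` and `PreFun κ` -/

lemma prefun_ext {s t : PreFun κ} (h1 : s.1 = t.1)
    (h2 : ∀ (c : K κ) (hc : c < s.1) (hc' : c < t.1), s.2 ⟨c, hc⟩ = t.2 ⟨c, hc'⟩) : s = t := by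
  obtain ⟨a, f⟩ := s; obtain ⟨b, g⟩ := t
  dsimp at h1; subst h1
  simp only [Sigma.mk.inj_iff, heq_eq_eq, true_and]
  funext c; exact h2 c.1 c.2 c.2

lemma resT_eq_resT {x y : K κ → K κ} {α : K κ} (h : ∀ c : K κ, c < α → x c = y c) :
    resT κ x α = resT κ y α :=
  prefun_ext rfl fun c hc _ => h c hc

lemma apply_eq_of_resT_eq {x y : K κ → K κ} {α : K κ} (h : resT κ x α = resT κ y α)
    {c : K κ} (hc : c < α) : x c = y c :=
  congrFun (eq_of_heq (Sigma.mk.inj_iff.mp h).2) ⟨c, hc⟩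

lemma resT_mono {x y : K κ → K κ} {α β : K κ} (hβ : β ≤ α) (h : resT κ x α = resT κ y α) :
    resT κ x β = resT κ y β :=
  resT_eq_resT fun c hc => apply_eq_of_resT_eq h (lt_of_lt_of_le hc hβ)

lemma cut_resT {x : K κ → K κ} {α β : K κ} (h : β ≤ α) :
    cut κ (resT κ x α) β = resT κ x β :=
  prefun_ext (min_eq_left h) fun _ _ _ => rfl

lemma K_nonempty (hκ : ℵ₀ ≤ κ) : Nonempty (K κ) := by
  rw [Ordinal.toType_nonempty_iff_ne_zero]
  intro h
  have h2 := Cardinal.card_ord κ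
  rw [h, Ordinal.card_zero] at h2
  simp [← h2] at hκ
  exact Cardinal.aleph0_ne_zero hκ

lemma exists_gt' (hκ : ℵ₀ ≤ κ) (a : K κ) : ∃ b : K κ, a < b := by
  have hlim : Order.IsSuccLimit κ.ord := Cardinal.isSuccLimit_ord hκ
  let e := Ordinal.ToType.mk (o := κ.ord)
  refine ⟨e ⟨(e.symm a).1 + 1, hlim.succ_lt (e.symm a).2⟩, ?_⟩
  conv_lhs => rw [← e.apply_symm_apply a]
  exact e.lt_iff_lt.mpr (Subtype.mk_lt_mk.mpr (Order.lt_succ _))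

lemma exists_isLUB_range (hκ : ℵ₀ < κ) (hreg : κ.IsRegular) (g : ℕ → K κ) :
    ∃ lam : K κ, IsLUB (Set.range g) lam := by
  have hub : ∃ b : K κ, b ∈ upperBounds (Set.range g) := by
    let e := Ordinal.ToType.mk (o := κ.ord)
    have hlt : ∀ n, (e.symm (g n)).1 < κ.ord := fun n => (e.symm (g n)).2
    have hsup : (⨆ n, (e.symm (g n)).1) < κ.ord := by
      apply Ordinal.iSup_lt_ord_lift _ hlt
      rw [Cardinal.mk_denumerable, hreg.cof_eq]
      simpa using hκ
    refine ⟨e ⟨_, hsup⟩, ?_⟩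
    rintro b ⟨n, rfl⟩
    conv_lhs => rw [← e.apply_symm_apply (g n)]
    apply e.le_iff_le.mpr
    exact Subtype.mk_le_mk.mpr (Ordinal.le_iSup (fun n => (e.symm (g n)).1) n)
  obtain ⟨b, hb⟩ := hub
  have wf : WellFounded ((· < ·) : K κ → K κ → Prop) := wellFounded_lt
  have hne : (upperBounds (Set.range g)).Nonempty := ⟨b, hb⟩
  refine ⟨wf.min _ hne, wf.min_mem _ hne, fun c hc => ?_⟩
  exact not_lt.1 fun h => wf.not_lt_min _ hc h

/-! ### Extracting basic neighbourhoods from open sets, and the modulus of continuity -/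

lemma exists_basic (hne : Nonempty (K κ)) (x : K κ → K κ) (U : Set (K κ → K κ))
    (hU : TopologicalSpace.GenerateOpen {U | ∃ s : PreFun κ, U = Nbhd κ s} U) :
    x ∈ U → ∃ β : K κ, ∀ y, resT κ y β = resT κ x β → y ∈ U := by
  induction hU with
  | basic V hs =>
    obtain ⟨s, rfl⟩ := hs
    intro hx
    exact ⟨s.1, fun y hy => hy.trans hx⟩
  | univ => exact fun _ => ⟨Classical.arbitrary _, fun _ _ => trivial⟩
  | inter V W hV hW ihV ihW =>
    intro hx
    obtain ⟨β₁, h1⟩ := ihV hx.1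
    obtain ⟨β₂, h2⟩ := ihW hx.2
    exact ⟨max β₁ β₂, fun y hy =>
      ⟨h1 y (resT_mono (le_max_left _ _) hy), h2 y (resT_mono (le_max_right _ _) hy)⟩⟩
  | sUnion S hS ih =>
    intro hx
    obtain ⟨V, hVS, hxV⟩ := hx
    obtain ⟨β, h⟩ := ih V hVS hxV
    exact ⟨β, fun y hy => ⟨V, hVS, h y hy⟩⟩

lemma modulus (hne : Nonempty (K κ)) {X : Set (K κ → K κ)}
    (f : (K κ → K κ) → X)
    (hcont : @Continuous _ _ (baire κ) (@instTopologicalSpaceSubtype _ _ (baire κ)) f)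
    (x : K κ → K κ) (α : K κ) :
    ∃ β : K κ, ∀ y, resT κ y β = resT κ x β →
      resT κ ((f y : K κ → K κ)) α = resT κ ((f x : K κ → K κ)) α := by
  letI := baire κ
  have hopen : IsOpen (Nbhd κ (resT κ (f x : K κ → K κ) α)) :=
    TopologicalSpace.GenerateOpen.basic _ ⟨_, rfl⟩
  have h2 : IsOpen (f ⁻¹' (Subtype.val ⁻¹' Nbhd κ (resT κ (f x : K κ → K κ) α))) :=
    hcont.isOpen_preimage _ (hopen.preimage continuous_subtype_val)
  have hx : x ∈ f ⁻¹' (Subtype.val ⁻¹' Nbhd κ (resT κ (f x : K κ → K κ) α)) := rfl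
  obtain ⟨β, hβ⟩ := exists_basic hne x _ h2 hx
  exact ⟨β, fun y hy => hβ y hy⟩

end Aux

/-! ### Small neighbourhoods and the splitting lemma -/

variable (κ)

/-- A basic neighbourhood is small (w.r.t. `F`) if its image has at most `κ^{<κ}` points. -/
def Sm (F : (K κ → K κ) → (K κ → K κ)) (s : PreFun κ) : Prop :=
  #(F '' Nbhd κ s) ≤ #(PreFun κ)

/-- The union of the images of all small neighbourhoods. -/
def Gbad (F : (K κ → K κ) → (K κ → K κ)) : Set (K κ → K κ) :=
  ⋃ p : {s : PreFun κ // Sm κ F s}, F '' Nbhd κ p.1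

variable {κ}

lemma aleph0_le_mk_prefun (hκ : ℵ₀ ≤ κ) : ℵ₀ ≤ #(PreFun κ) := by
  have h1 : #(K κ) = κ := by rw [Cardinal.mk_toType, Cardinal.card_ord]
  have h2 : #(K κ) ≤ #(PreFun κ) :=
    Cardinal.mk_le_of_injective (f := fun α : K κ => (⟨α, fun b => b.1⟩ : PreFun κ))
      (fun a b h => congrArg Sigma.fst h)
  calc ℵ₀ ≤ κ := hκ
    _ = #(K κ) := h1.symm
    _ ≤ _ := h2

lemma mk_Gbad_le (hκ : ℵ₀ ≤ κ) (F : (K κ → K κ) → (K κ → K κ)) :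
    #(Gbad κ F) ≤ #(PreFun κ) := by
  have h1 : #(Gbad κ F) ≤ Cardinal.sum fun p : {s : PreFun κ // Sm κ F s} => #(F '' Nbhd κ p.1) :=
    Cardinal.mk_iUnion_le_sum_mk
  have h2 : (Cardinal.sum fun p : {s : PreFun κ // Sm κ F s} => #(F '' Nbhd κ p.1)) ≤
      Cardinal.sum fun _ : {s : PreFun κ // Sm κ F s} => #(PreFun κ) :=
    Cardinal.sum_le_sum _ _ fun p => p.2
  rw [Cardinal.sum_const'] at h2
  have h3 : #{s : PreFun κ // Sm κ F s} ≤ #(PreFun κ) := Cardinal.mk_subtype_le _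
  calc #(Gbad κ F) ≤ _ := h1.trans h2
    _ ≤ #(PreFun κ) * #(PreFun κ) := mul_le_mul_left h3 _
    _ = #(PreFun κ) := Cardinal.mul_eq_self (aleph0_le_mk_prefun hκ)

lemma exists_split (hκ : ℵ₀ ≤ κ) (F : (K κ → K κ) → (K κ → K κ))
    (x : K κ → K κ) (β : K κ) (hx : F x ∉ Gbad κ F) :
    ∃ (x₀ x₁ : K κ → K κ) (δ : K κ),
      resT κ x₀ β = resT κ x β ∧ resT κ x₁ β = resT κ x β ∧
      F x₀ ∉ Gbad κ F ∧ F x₁ ∉ Gbad κ F ∧ F x₀ δ ≠ F x₁ δ := by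
  set s : PreFun κ := resT κ x β with hs
  have hxN : x ∈ Nbhd κ s := rfl
  have hbig : ¬ Sm κ F s := by
    intro hsm
    exact hx (Set.mem_iUnion.mpr ⟨⟨s, hsm⟩, ⟨x, hxN, rfl⟩⟩)
  rw [Sm, not_le] at hbig
  have hdiff : 1 < #((F '' Nbhd κ s \ Gbad κ F : Set _)) := by
    by_contra hle
    rw [not_lt] at hle
    have hsub : F '' Nbhd κ s ⊆ (F '' Nbhd κ s \ Gbad κ F) ∪ Gbad κ F := fun z hz => by
      by_cases h : z ∈ Gbad κ F
      · exact Or.inr h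
      · exact Or.inl ⟨hz, h⟩
    have := (Cardinal.mk_le_mk_of_subset hsub).trans (Cardinal.mk_union_le _ _)
    have h2 : #((F '' Nbhd κ s \ Gbad κ F : Set _)) + #(Gbad κ F) ≤ 1 + #(PreFun κ) :=
      add_le_add hle (mk_Gbad_le hκ F)
    have h3 : (1 : Cardinal) + #(PreFun κ) = #(PreFun κ) :=
      Cardinal.add_eq_right (aleph0_le_mk_prefun hκ)
        (le_trans one_le_aleph0 (aleph0_le_mk_prefun hκ))
    rw [h3] at h2
    exact absurd (this.trans h2) (not_le.mpr hbig)
  rw [Cardinal.one_lt_iff_nontrivial] at hdiff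
  obtain ⟨⟨z₀, hz₀⟩, ⟨z₁, hz₁⟩, hne⟩ := hdiff
  obtain ⟨x₀, hx₀N, hFx₀⟩ := hz₀.1
  obtain ⟨x₁, hx₁N, hFx₁⟩ := hz₁.1
  have hzz : z₀ ≠ z₁ := fun h => hne (Subtype.ext h)
  obtain ⟨δ, hδ⟩ := Function.ne_iff.mp hzz
  exact ⟨x₀, x₁, δ, hx₀N, hx₁N, hFx₀ ▸ hz₀.2, hFx₁ ▸ hz₁.2, by rw [hFx₀, hFx₁]; exact hδ⟩

/-! ### The stage-by-stage construction -/

variable (κ)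

/-- stage data: per branch a point of `^κκ` and a level, plus the stage level -/
abbrev Stage : Type u := ((ℕ → Bool) → ((K κ → K κ) × K κ)) × K κ

def GoodStage (F : (K κ → K κ) → (K κ → K κ)) (n : ℕ) (d : Stage κ) : Prop :=
  (∀ b b' : ℕ → Bool, (∀ i, i < n → b i = b' i) → d.1 b = d.1 b') ∧
  (∀ b, F (d.1 b).1 ∉ Gbad κ F)

def RelStage (F : (K κ → K κ) → (K κ → K κ)) (n : ℕ) (d d' : Stage κ) : Prop :=
  (∀ b, (d.1 b).2 ≤ (d'.1 b).2) ∧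
  (∀ b, resT κ (d'.1 b).1 (d.1 b).2 = resT κ (d.1 b).1 (d.1 b).2) ∧
  d.2 < d'.2 ∧
  (∀ b y, resT κ y (d'.1 b).2 = resT κ (d'.1 b).1 (d'.1 b).2 →
      resT κ (F y) d'.2 = resT κ (F (d'.1 b).1) d'.2) ∧
  (∀ b b' : ℕ → Bool, (∀ i, i < n → b i = b' i) → b n ≠ b' n →
      resT κ (F (d'.1 b).1) d'.2 ≠ resT κ (F (d'.1 b').1) d'.2)

variable {κ}

lemma step_lemma (hκ : ℵ₀ ≤ κ) (F : (K κ → K κ) → (K κ → K κ))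
    (hmod : ∀ (x : K κ → K κ) (α : K κ), ∃ β : K κ, ∀ y, resT κ y β = resT κ x β →
      resT κ (F y) α = resT κ (F x) α)
    (n : ℕ) (d : Stage κ) (hd : GoodStage κ F n d) :
    ∃ d', GoodStage κ F (n+1) d' ∧ RelStage κ F n d d' := by
  classical
  let ext : ∀ {m : ℕ}, (Fin m → Bool) → (ℕ → Bool) := fun {m} w i =>
    if h : i < m then w ⟨i, h⟩ else false
  have hsplit : ∀ w : Fin n → Bool,
      ∃ (x₀ x₁ : K κ → K κ) (δ : K κ),
        resT κ x₀ (d.1 (ext w)).2 = resT κ (d.1 (ext w)).1 (d.1 (ext w)).2 ∧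
        resT κ x₁ (d.1 (ext w)).2 = resT κ (d.1 (ext w)).1 (d.1 (ext w)).2 ∧
        F x₀ ∉ Gbad κ F ∧ F x₁ ∉ Gbad κ F ∧ F x₀ δ ≠ F x₁ δ :=
    fun w => exists_split hκ F _ _ (hd.2 (ext w))
  choose X0 X1 δ hX0 hX1 hG0 hG1 hδ using hsplit
  obtain ⟨u, hu⟩ : ∃ u : K κ, u ∈ upperBounds (insert d.2 (Set.range δ)) := by
    haveI : Nonempty (K κ) := K_nonempty hκ
    have hfin : (insert d.2 (Set.range δ)).Finite := (Set.finite_range δ).insert _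
    exact hfin.bddAbove
  obtain ⟨α', hα'⟩ := exists_gt' hκ u
  have hdα : d.2 < α' := lt_of_le_of_lt (hu (Set.mem_insert _ _)) hα'
  have hδα : ∀ w, δ w < α' := fun w =>
    lt_of_le_of_lt (hu (Set.mem_insert_of_mem _ ⟨w, rfl⟩)) hα'
  let wv : (Fin (n+1) → Bool) → (Fin n → Bool) := fun v i => v i.castSucc
  let xx : (Fin (n+1) → Bool) → (K κ → K κ) := fun v =>
    if v (Fin.last n) then X1 (wv v) else X0 (wv v)
  have hmm : ∀ v : Fin (n+1) → Bool, ∃ γ : K κ, ∀ y, resT κ y γ = resT κ (xx v) γ →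
      resT κ (F y) α' = resT κ (F (xx v)) α' := fun v => hmod (xx v) α'
  choose γ hγ using hmm
  let mβ : (Fin (n+1) → Bool) → K κ := fun v => max (d.1 (ext (wv v))).2 (γ v)
  let trc : (ℕ → Bool) → (Fin (n+1) → Bool) := fun b i => b i.1
  refine ⟨⟨fun b => (xx (trc b), mβ (trc b)), α'⟩, ?_, ?_⟩
  · constructor
    · intro b b' h
      have : trc b = trc b' := funext fun i => h i.1 i.2
      simp only [this]
    · intro b
      by_cases h : trc b (Fin.last n) <;> simp only [xx, h, if_true, if_false]
      · exact hG1 _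
      · exact hG0 _
  · have hpar : ∀ b : ℕ → Bool, d.1 (ext (wv (trc b))) = d.1 b := by
      intro b
      apply hd.1
      intro i hi
      simp only [ext, wv, trc]
      rw [dif_pos hi]
      rfl
    have hxb : ∀ b : ℕ → Bool,
        resT κ (xx (trc b)) (d.1 b).2 = resT κ (d.1 b).1 (d.1 b).2 := by
      intro b
      by_cases h : trc b (Fin.last n) <;> simp only [xx, h, if_true, if_false] <;>
        rw [← hpar b]
      · exact hX1 _
      · exact hX0 _
    refine ⟨?_, ?_, hdα, ?_, ?_⟩
    · intro b
      dsimp only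
      rw [← hpar b]
      exact le_max_left _ _
    · exact hxb
    · intro b y hy
      dsimp only at hy ⊢
      exact hγ (trc b) y (resT_mono (le_max_right _ _) hy)
    · intro b b' hag hne
      dsimp only
      have hw : wv (trc b) = wv (trc b') := by
        funext i
        exact hag i.1 i.2
      have hlast : trc b (Fin.last n) = b n := rfl
      have hlast' : trc b' (Fin.last n) = b' n := rfl
      intro heq
      have hval := apply_eq_of_resT_eq heq (hδα (wv (trc b)))
      cases hb : b n <;> cases hb' : b' n
      · exact hne (hb.trans hb'.symm)
      · have e1 : xx (trc b) = X0 (wv (trc b)) := by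
          simp only [xx]; rw [hlast, hb]; simp
        have e2 : xx (trc b') = X1 (wv (trc b)) := by
          simp only [xx]; rw [hlast', hb', ← hw]; simp
        rw [e1, e2] at hval
        exact hδ (wv (trc b)) hval
      · have e1 : xx (trc b) = X1 (wv (trc b)) := by
          simp only [xx]; rw [hlast, hb]; simp
        have e2 : xx (trc b') = X0 (wv (trc b)) := by
          simp only [xx]; rw [hlast', hb', ← hw]; simp
        rw [e1, e2] at hval
        exact hδ (wv (trc b)) hval.symm
      · exact hne (hb.trans hb'.symm)

section Seq

variable {F : (K κ → K κ) → (K κ → K κ)}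
  (hstep : ∀ n d, GoodStage κ F n d → ∃ d', GoodStage κ F (n+1) d' ∧ RelStage κ F n d d')
  {d0 : Stage κ} (h0 : GoodStage κ F 0 d0)

def seqD : ∀ n : ℕ, {d : Stage κ // GoodStage κ F n d}
  | 0 => ⟨d0, h0⟩
  | n+1 => ⟨Classical.choose (hstep n (seqD n).1 (seqD n).2),
      (Classical.choose_spec (hstep n (seqD n).1 (seqD n).2)).1⟩

lemma seqD_rel (n : ℕ) : RelStage κ F n (seqD hstep h0 n).1 (seqD hstep h0 (n+1)).1 :=
  (Classical.choose_spec (hstep n (seqD hstep h0 n).1 (seqD hstep h0 n).2)).2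

end Seq

end GBaire

namespace GBaire

/-- Let `κ` be an uncountable regular cardinal and let `T` be a subtree
of `^{<κ}κ` with `|[T]| > κ^{<κ}`.  If `[T]` is a continuous image of `^κκ`, then `T`
contains a Cantor subtree. -/
theorem hasCantorSubtree_of_continuous_image
    (κ : Cardinal.{u}) (hκ : ℵ₀ < κ) (hreg : κ.IsRegular)
    (T : Set (PreFun κ)) (hsub : IsSubtree κ T)
    (hbig : #(PreFun κ) < #(branches κ T))
    (himg : IsContImage κ (branches κ T)) :
    HasCantorSubtree κ T := by
  classical
  obtain ⟨f, hcont, hsurj⟩ := himg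
  haveI hKne : Nonempty (K κ) := K_nonempty hκ.le
  set F : (K κ → K κ) → (K κ → K κ) := fun y => (f y : K κ → K κ) with hF
  have hFbr : ∀ y, F y ∈ branches κ T := fun y => (f y).2
  -- the modulus of continuity of `F`
  have hmod : ∀ (x : K κ → K κ) (α : K κ), ∃ β : K κ, ∀ y, resT κ y β = resT κ x β →
      resT κ (F y) α = resT κ (F x) α := fun x α => modulus hKne f hcont x α
  -- the root of the construction
  have hroot : ∃ x : K κ → K κ, F x ∉ Gbad κ F := by
    by_contra h
    push_neg at h
    have hsubG : branches κ T ⊆ Gbad κ F := by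
      intro z hz
      obtain ⟨y, hy⟩ := hsurj ⟨z, hz⟩
      have : F y = z := congrArg Subtype.val hy
      exact this ▸ h y
    exact absurd ((Cardinal.mk_le_mk_of_subset hsubG).trans (mk_Gbad_le hκ.le F))
      (not_le.mpr hbig)
  obtain ⟨xroot, hxroot⟩ := hroot
  -- the stage-by-stage construction
  have hstep := step_lemma hκ.le F hmod
  set d0 : Stage κ := ⟨fun _ => (xroot, Classical.arbitrary (K κ)), Classical.arbitrary (K κ)⟩
    with hd0
  have h0 : GoodStage κ F 0 d0 := ⟨fun _ _ _ => rfl, fun _ => hxroot⟩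
  set D : ∀ n : ℕ, {d : Stage κ // GoodStage κ F n d} := seqD hstep h0 with hD
  have hrel : ∀ n, RelStage κ F n (D n).1 (D (n+1)).1 := fun n => seqD_rel hstep h0 n
  -- the chain property
  have hchain : ∀ (b : ℕ → Bool) (m n : ℕ), m ≤ n →
      ((D m).1.1 b).2 ≤ ((D n).1.1 b).2 ∧
      resT κ ((D n).1.1 b).1 ((D m).1.1 b).2 = resT κ ((D m).1.1 b).1 ((D m).1.1 b).2 := by
    intro b m n hmn
    induction n, hmn using Nat.le_induction with
    | base => exact ⟨le_rfl, rfl⟩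
    | succ n hmn ih =>
      refine ⟨ih.1.trans ((hrel n).1 b), ?_⟩
      exact (resT_mono ih.1 ((hrel n).2.1 b)).trans ih.2
  -- the limit points
  set xlim : (ℕ → Bool) → (K κ → K κ) := fun b c =>
    if h : ∃ n, c < ((D n).1.1 b).2 then ((D (Nat.find h)).1.1 b).1 c
    else ((D 0).1.1 b).1 c with hxlimdef
  have hxlim : ∀ (b : ℕ → Bool) (m : ℕ),
      resT κ (xlim b) ((D m).1.1 b).2 = resT κ ((D m).1.1 b).1 ((D m).1.1 b).2 := by
    intro b m
    refine resT_eq_resT fun c hc => ?_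
    have h : ∃ n, c < ((D n).1.1 b).2 := ⟨m, hc⟩
    have hxc : xlim b c = ((D (Nat.find h)).1.1 b).1 c := dif_pos h
    rw [hxc]
    have hk : c < ((D (Nat.find h)).1.1 b).2 := Nat.find_spec h
    rcases le_total (Nat.find h) m with hle | hle
    · exact (apply_eq_of_resT_eq (hchain b (Nat.find h) m hle).2 hk).symm
    · exact apply_eq_of_resT_eq (hchain b m (Nat.find h) hle).2 hc
  -- the levels
  set l : ℕ → K κ := fun n => (D (n+1)).1.2 with hl
  have hlmono : StrictMono l := strictMono_nat_of_lt_succ fun n => (hrel (n+1)).2.2.1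
  obtain ⟨lam, hlub⟩ := exists_isLUB_range hκ hreg l
  have hlam_ub : ∀ n, l n ≤ lam := fun n => hlub.1 ⟨n, rfl⟩
  -- constancy and separation for the limit points
  have hconst : ∀ (n : ℕ) (b : ℕ → Bool),
      resT κ (F (xlim b)) (l n) = resT κ (F ((D (n+1)).1.1 b).1) (l n) :=
    fun n b => (hrel n).2.2.2.1 b (xlim b) (hxlim b (n+1))
  have hsepfin : ∀ (b b' : ℕ → Bool) (n : ℕ), (∀ i, i < n → b i = b' i) → b n ≠ b' n →
      resT κ (F (xlim b)) (l n) ≠ resT κ (F (xlim b')) (l n) := by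
    intro b b' n hag hne
    rw [hconst n b, hconst n b']
    exact (hrel n).2.2.2.2 b b' hag hne
  -- the branch map
  set Φ : (ℕ → Bool) → PreFun κ := fun b => resT κ (F (xlim b)) lam with hΦ
  have hΦinj : Function.Injective Φ := by
    intro b b' hbb
    by_contra hne
    have hex : ∃ n, b n ≠ b' n := by
      by_contra h
      push_neg at h
      exact hne (funext h)
    have hag : ∀ i, i < Nat.find hex → b i = b' i := fun i hi => by
      by_contra h
      exact Nat.find_min hex hi h
    exact hsepfin b b' (Nat.find hex) hag (Nat.find_spec hex)
      (resT_mono (hlam_ub (Nat.find hex)) hbb)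
  -- assembling the Cantor subtree
  refine ⟨l, lam, hlmono, hlub, ?_, Set.range Φ, ?_, ?_, ?_⟩
  · exact ⟨Φ (fun _ => false), hFbr (xlim fun _ => false) lam, rfl⟩
  · rintro _ ⟨b, rfl⟩
    exact ⟨hFbr (xlim b) lam, rfl⟩
  · intro hcnt
    haveI : Countable (Set.range Φ) := hcnt.to_subtype
    have hcnt2 : Countable (ℕ → Bool) := by
      have : Function.Injective (fun b : ℕ → Bool => (⟨Φ b, ⟨b, rfl⟩⟩ : Set.range Φ)) :=
        fun b b' h => hΦinj (congrArg Subtype.val h)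
      exact this.countable
    have h1 : #(ℕ → Bool) ≤ ℵ₀ := Cardinal.mk_le_aleph0_iff.mpr hcnt2
    have h2 : #(ℕ → Bool) = 2 ^ ℵ₀ := by
      rw [← Cardinal.power_def, Cardinal.mk_bool, Cardinal.mk_denumerable]
    rw [h2] at h1
    exact absurd (lt_of_lt_of_le (Cardinal.cantor ℵ₀) h1) (lt_irrefl _)
  · intro n
    have hsub2 : (fun t => cut κ t (l n)) '' Set.range Φ ⊆
        Set.range (fun v : Fin (n+1) → Bool =>
          resT κ (F ((D (n+1)).1.1 (fun i => if h : i < n+1 then v ⟨i, h⟩ else false)).1)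
            (l n)) := by
      rintro _ ⟨_, ⟨b, rfl⟩, rfl⟩
      refine ⟨fun i => b i.1, ?_⟩
      have hnode : (D (n+1)).1.1
          (fun i => if h : i < n+1 then (fun j : Fin (n+1) => b j.1) ⟨i, h⟩ else false)
          = (D (n+1)).1.1 b := by
        apply (D (n+1)).2.1
        intro i hi
        rw [dif_pos hi]
      show _ = (fun t => cut κ t (l n)) (Φ b)
      have hcut : cut κ (Φ b) (l n) = resT κ (F (xlim b)) (l n) := cut_resT (hlam_ub n)
      dsimp only
      rw [hcut, hconst n b, hnode]
    exact ((Set.finite_range _).countable).mono hsub2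

end GBaire
end
end
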